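/- The greedy dynamic program computing β(s,t) via the recursion β(s,t) = max( β(s-1,t)·P(s,ε), β(s-1,t-1)·max_{a≠ε} P(s,a) ) yields exactly the maximum probability max{ P(w) : |w| = S, |Γ'(w)| = T } of a length-S token sequence reducing to a length-T text, for every S ≥ T ≥ 0. In particular, the length-control decoding algorithm with beam size 1, when tokens are not merged (only ε removed), is exact. -/

import Mathlib

open Finset

/-- The dynamic-programming recursion for `β`: initialization `β(0,0) = 1`,
`β(0,t) = 0` for `t ≥ 1`, and
`β(s,t) = max( β(s-1,t)·P(s,ε), β(s-1,t-1)·max_{a≠ε} P(s,a) )`,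
with the second term omitted when `t = 0`. -/
noncomputable def betaDP {σ : Type*} [Fintype σ] [DecidableEq σ]
    (P : ℕ → σ → NNReal) (ε : σ) : ℕ → ℕ → NNReal
  | 0, 0 => 1
  | 0, _ + 1 => 0
  | s + 1, 0 => betaDP P ε s 0 * P (s + 1) ε
  | s + 1, t + 1 =>
      max (betaDP P ε s (t + 1) * P (s + 1) ε)
        (betaDP P ε s t * (univ.filter (· ≠ ε)).sup (P (s + 1)))

lemma my_sup_mul_const {α : Type*} (s : Finset α) (f : α → NNReal) (c : NNReal) :
    s.sup f * c = s.sup fun a => f a * c := by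
  rcases s.eq_empty_or_nonempty with h | h
  · simp [h]
  · obtain ⟨b, hb, hb2⟩ := Finset.exists_mem_eq_sup s h f
    refine le_antisymm ?_ (Finset.sup_le fun x hx => mul_le_mul_of_nonneg_right (Finset.le_sup hx) zero_le)
    rw [hb2]
    exact Finset.le_sup (f := fun a => f a * c) hb

lemma my_const_mul_sup {α : Type*} (s : Finset α) (f : α → NNReal) (c : NNReal) :
    c * s.sup f = s.sup fun a => c * f a := by
  rw [mul_comm, my_sup_mul_const]
  simp [mul_comm]

lemma my_sup_filter {α : Type*} (s : Finset α) (Q : α → Prop) [DecidablePred Q]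
    (f : α → NNReal) :
    (s.filter Q).sup f = s.sup fun x => if Q x then f x else 0 := by
  refine le_antisymm (Finset.sup_le fun x hx => ?_) (Finset.sup_le fun x hx => ?_)
  · rw [Finset.mem_filter] at hx
    have := Finset.le_sup (f := fun x => if Q x then f x else 0) hx.1
    simpa [hx.2] using this
  · split_ifs with h
    · exact Finset.le_sup (Finset.mem_filter.2 ⟨hx, h⟩)
    · exact zero_le

lemma my_sup_pi_succ {σ : Type*} [Fintype σ] [DecidableEq σ] {n : ℕ}
    (g : (Fin (n + 1) → σ) → NNReal) :
    (univ : Finset (Fin (n + 1) → σ)).sup g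
      = (univ : Finset σ).sup fun a =>
          (univ : Finset (Fin n → σ)).sup fun w => g (Fin.snoc w a) := by
  refine le_antisymm (Finset.sup_le fun v _ => ?_)
    (Finset.sup_le fun a _ => Finset.sup_le fun w _ => Finset.le_sup (mem_univ _))
  calc g v = g (Fin.snoc (Fin.init v) (v (Fin.last n))) := by rw [Fin.snoc_init_self]
    _ ≤ (univ : Finset (Fin n → σ)).sup fun w => g (Fin.snoc w (v (Fin.last n))) :=
        Finset.le_sup (f := fun w => g (Fin.snoc w (v (Fin.last n)))) (mem_univ _)
    _ ≤ _ := Finset.le_sup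
        (f := fun a => (univ : Finset (Fin n → σ)).sup fun w => g (Fin.snoc w a))
        (mem_univ _)

lemma my_sup_univ_split {σ : Type*} [Fintype σ] [DecidableEq σ] (ε : σ) (h : σ → NNReal) :
    (univ : Finset σ).sup h = max (h ε) ((univ.filter (· ≠ ε)).sup h) := by
  have huniv : (univ : Finset σ) = insert ε (univ.filter (· ≠ ε)) := by
    ext a; by_cases ha : a = ε <;> simp [ha]
  have h2 := Finset.sup_insert (b := ε) (s := univ.filter (· ≠ ε)) (f := h)
  rw [← huniv] at h2
  rw [h2]

lemma my_ofFn_snoc {σ : Type*} {n : ℕ} (w : Fin n → σ) (a : σ) :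
    List.ofFn (Fin.snoc w a : Fin (n + 1) → σ) = List.ofFn w ++ [a] := by
  rw [List.ofFn_succ']
  simp

lemma betaDP_eq {σ : Type*} [Fintype σ] [DecidableEq σ]
    (P : ℕ → σ → NNReal) (ε : σ) :
    ∀ S T : ℕ, betaDP P ε S T =
      (univ.filter fun w : Fin S → σ =>
          ((List.ofFn w).filter (· ≠ ε)).length = T).sup
        fun w => ∏ i, P (i.1 + 1) (w i) := by
  intro S
  induction S with
  | zero =>
    intro T
    cases T with
    | zero => simp [betaDP]
    | succ t => simp [betaDP]
  | succ S ih =>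
    have key : ∀ T : ℕ,
        ((univ : Finset (Fin (S + 1) → σ)).filter fun v =>
            ((List.ofFn v).filter (· ≠ ε)).length = T).sup
          (fun v => ∏ i, P (i.1 + 1) (v i))
        = max
            (((univ : Finset (Fin S → σ)).filter fun w =>
                ((List.ofFn w).filter (· ≠ ε)).length = T).sup
              (fun w => ∏ i, P (i.1 + 1) (w i)) * P (S + 1) ε)
            ((univ.filter (· ≠ ε)).sup fun a =>
              ((univ : Finset (Fin S → σ)).filter fun w =>
                  ((List.ofFn w).filter (· ≠ ε)).length + 1 = T).sup
                (fun w => ∏ i, P (i.1 + 1) (w i)) * P (S + 1) a) := by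
      intro T
      rw [my_sup_filter, my_sup_pi_succ, my_sup_univ_split ε]
      congr 1
      · rw [my_sup_mul_const, my_sup_filter]
        refine Finset.sup_congr rfl fun w _ => ?_
        rw [my_ofFn_snoc, Fin.prod_univ_castSucc]
        simp
      · refine Finset.sup_congr rfl fun a ha => ?_
        rw [Finset.mem_filter] at ha
        rw [my_sup_mul_const, my_sup_filter]
        refine Finset.sup_congr rfl fun w _ => ?_
        rw [my_ofFn_snoc, Fin.prod_univ_castSucc]
        simp [ha.2]
    intro T
    cases T with
    | zero =>
      rw [key 0]
      have hz : ((univ.filter (· ≠ ε)).sup fun a : σ =>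
          ((univ : Finset (Fin S → σ)).filter fun w =>
              ((List.ofFn w).filter (· ≠ ε)).length + 1 = 0).sup
            (fun w => ∏ i, P (i.1 + 1) (w i)) * P (S + 1) a) = 0 := by
        refine le_antisymm (Finset.sup_le fun a _ => ?_) (zero_le)
        have : ((univ : Finset (Fin S → σ)).filter fun w =>
            ((List.ofFn w).filter (· ≠ ε)).length + 1 = 0) = ∅ := by
          ext w; simp
        simp [this]
      rw [hz, max_eq_left (zero_le), betaDP, ih 0]
    | succ t =>
      rw [key (t + 1), betaDP, ih (t + 1), ih t]
      congr 1
      have hfeq : ((univ : Finset (Fin S → σ)).filter fun w =>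
          ((List.ofFn w).filter (· ≠ ε)).length + 1 = t + 1)
          = ((univ : Finset (Fin S → σ)).filter fun w =>
          ((List.ofFn w).filter (· ≠ ε)).length = t) := by
        ext w; simp
      rw [hfeq, my_const_mul_sup]

/-- The greedy dynamic program `β` yields exactly the maximum probability
`max{ P(w) : |w| = S, |Γ'(w)| = T }` of a length-`S` token sequence whose blank-removed
reduction has length `T`, for every `S ≥ T ≥ 0`: the length-control algorithm with beam
size 1 (removing blanks only, without merging) is exact. -/
theorem betaDP_exact {σ : Type*} [Fintype σ] [DecidableEq σ]
    (P : ℕ → σ → NNReal) (ε : σ) (hex : ∃ a : σ, a ≠ ε)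
    (S T : ℕ) (hTS : T ≤ S) :
    betaDP P ε S T =
      (univ.filter fun w : Fin S → σ =>
          ((List.ofFn w).filter (· ≠ ε)).length = T).sup
        fun w => ∏ i, P (i.1 + 1) (w i) := by
  exact betaDP_eq P ε S T
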